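/- Let p > g ≥ 1, K a p-adic field, and π_1, …, π_g ∈ K with 0 < |π_i| ≤ |π_g| < 1 for all i. Set h(T) := ∏_{i=1}^g exp(∑_{k≥0} (π_i T^i)^{p^k}/p^k) and κ := (g, 0, 0, …). Then |S_κ(h(T))| = |π_g|, i.e. the coefficient of T^g in h(T) has absolute value exactly |π_g|. -/

import Mathlib

open scoped Classical

/-- `∑_{k≥0} T^{p^k - 1}`: the Artin–Hasse exponential `e^{AH}` is the unique
power series `F` with `F(0) = 1` and `F' = (∑_k T^{p^k-1})·F`, i.e.
`F = exp (∑_k T^{p^k}/p^k)`. -/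
noncomputable def ahLogDeriv (p : ℕ) : PowerSeries ℚ :=
  PowerSeries.mk fun n => if ∃ k : ℕ, n + 1 = p ^ k then (1 : ℚ) else 0

/-- The substitution `e^{AH}(π T^d)` as a power series over `K`, where `AH`
has rational coefficients `a_m`:  its `n`-th coefficient is `a_{n/d} π^{n/d}`
if `d ∣ n` and `0` otherwise. -/
noncomputable def ahSubst (AH : PowerSeries ℚ) {K : Type*} [Field K] [CharZero K]
    (π : K) (d : ℕ) : PowerSeries K :=
  PowerSeries.mk fun n =>
    if d ∣ n then ((PowerSeries.coeff (n / d) AH : ℚ) : K) * π ^ (n / d) else 0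

lemma ah_coeff_eq (p : ℕ) (hp : p.Prime) (AH : PowerSeries ℚ)
    (hAH0 : PowerSeries.constantCoeff AH = 1)
    (hAHd : PowerSeries.derivative ℚ AH = ahLogDeriv p * AH) :
    ∀ m : ℕ, m < p → PowerSeries.coeff (R := ℚ) m AH = 1 / m.factorial := by
  intro m
  induction m with
  | zero =>
    intro _
    simpa [PowerSeries.coeff_zero_eq_constantCoeff] using hAH0
  | succ n ih =>
    intro hlt
    have hn : PowerSeries.coeff (R := ℚ) n AH = 1 / n.factorial := ih (by omega)
    have h1 : PowerSeries.coeff (R := ℚ) n (PowerSeries.derivative ℚ AH) =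
        PowerSeries.coeff (R := ℚ) (n + 1) AH * (n + 1) := PowerSeries.coeff_derivative AH n
    have h2 : PowerSeries.coeff (R := ℚ) n (ahLogDeriv p * AH) = PowerSeries.coeff (R := ℚ) n AH := by
      rw [PowerSeries.coeff_mul]
      rw [Finset.sum_eq_single (0, n)]
      · have hex : ∃ k : ℕ, 0 + 1 = p ^ k := ⟨0, by simp⟩
        simp [ahLogDeriv, PowerSeries.coeff_mk, hex]
      · rintro ⟨a, b⟩ hab hne
        rw [Finset.HasAntidiagonal.mem_antidiagonal] at hab
        have ha0 : a ≠ 0 := by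
          rintro rfl
          simp only [Nat.zero_add] at hab
          exact hne (by simp [hab])
        have : ¬ ∃ k : ℕ, a + 1 = p ^ k := by
          rintro ⟨k, hk⟩
          rcases k with _ | k
          · simp at hk; omega
          · have : p ≤ p ^ (k + 1) := Nat.le_self_pow (by omega) p
            omega
        simp [ahLogDeriv, PowerSeries.coeff_mk, this]
      · intro h
        exact absurd (Finset.HasAntidiagonal.mem_antidiagonal.mpr (by simp)) h
    have h3 : PowerSeries.coeff (R := ℚ) (n + 1) AH * (n + 1) = 1 / n.factorial := by
      rw [← h1, hAHd, h2, hn]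
    have hne : ((n : ℚ) + 1) ≠ 0 := by positivity
    have hfac : ((n.factorial : ℚ)) ≠ 0 := by
      exact_mod_cast n.factorial_ne_zero
    field_simp [Nat.factorial_succ] at h3 ⊢
    push_cast [Nat.factorial_succ] at h3 ⊢
    linear_combination h3

lemma fact_norm_one (p : ℕ) (hp : p.Prime) {K : Type*} [NormedField K] [CharZero K]
    (hnorm : ∀ q : ℚ, ‖(q : K)‖ = (padicNorm p q : ℝ)) {m : ℕ} (hm : m < p) :
    ‖((1 / (m.factorial : ℚ) : ℚ) : K)‖ = 1 := by
  haveI : Fact p.Prime := ⟨hp⟩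
  rw [hnorm]
  have hdvd : ¬ p ∣ m.factorial := by
    intro h
    exact absurd ((Nat.Prime.dvd_factorial hp).mp h) (by omega)
  have : padicNorm p ((m.factorial : ℚ)) = 1 := (padicNorm.nat_eq_one_iff m.factorial).mpr hdvd
  rw [padicNorm.div, padicNorm.one, this]
  norm_num

/-- Let `p > g ≥ 1`, `K` a `p`-adic field (ultrametric
normed, norm extending the `p`-adic norm of `ℚ`), and `π_1, …, π_g ∈ K` with
`0 < |π_i| ≤ |π_g| < 1`.  Set
`h(T) = ∏_{i=1}^g e^{AH}(π_i T^i) = ∏_{i=1}^g exp (∑_{k≥0} (π_i T^i)^{p^k}/p^k)`.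
Then the coefficient of `T^g` in `h(T)` (that is, `S_{(g)}(h)`) has norm
exactly `|π_g|`. -/
theorem coeff_g_of_product_norm
    (p g : ℕ) (hp : p.Prime) (hg : 0 < g) (hgp : g < p)
    (K : Type*) [NormedField K] [IsUltrametricDist K] [CharZero K]
    (hnorm : ∀ q : ℚ, ‖(q : K)‖ = (padicNorm p q : ℝ))
    (AH : PowerSeries ℚ)
    (hAH0 : PowerSeries.constantCoeff AH = 1)
    (hAHd : PowerSeries.derivative ℚ AH = ahLogDeriv p * AH)
    (π : Fin g → K)
    (hπ0 : ∀ i, 0 < ‖π i‖)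
    (hπle : ∀ i, ‖π i‖ ≤ ‖π ⟨g - 1, by omega⟩‖)
    (hπ1 : ‖π ⟨g - 1, by omega⟩‖ < 1) :
    ‖PowerSeries.coeff (R := K) g (∏ i : Fin g, ahSubst AH (π i) ((i : ℕ) + 1))‖ =
      ‖π ⟨g - 1, by omega⟩‖ := by
  have ha : ∀ m : ℕ, m < p → PowerSeries.coeff (R := ℚ) m AH = 1 / m.factorial :=
    ah_coeff_eq p hp AH hAH0 hAHd
  set I : Fin g := ⟨g - 1, by omega⟩ with hIdef
  have hI1 : (I : ℕ) + 1 = g := by simp [hIdef]; omega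
  rw [PowerSeries.coeff_prod]
  set l₀ : Fin g →₀ ℕ := Finsupp.single I g with hl₀def
  set F : (Fin g →₀ ℕ) → K :=
    fun l => ∏ i : Fin g, PowerSeries.coeff (R := K) (l i) (ahSubst AH (π i) ((i : ℕ) + 1)) with hFdef
  have hl₀mem : l₀ ∈ Finset.finsuppAntidiag Finset.univ g := by
    rw [Finset.mem_finsuppAntidiag]
    constructor
    · simp [hl₀def, Finsupp.single_apply]
    · exact fun i _ => Finset.mem_univ i
  -- value of the main term
  have hcoeff : ∀ (i : Fin g) (n : ℕ), ((i : ℕ) + 1) ∣ n →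
      PowerSeries.coeff (R := K) n (ahSubst AH (π i) ((i : ℕ) + 1)) =
        ((PowerSeries.coeff (R := ℚ) (n / ((i : ℕ) + 1)) AH : ℚ) : K) * π i ^ (n / ((i : ℕ) + 1)) := by
    intro i n hdvd
    simp [ahSubst, PowerSeries.coeff_mk, hdvd]
  have hmain : F l₀ = π I := by
    simp only [hFdef]
    rw [Finset.prod_eq_single I]
    · have : l₀ I = g := by simp [hl₀def]
      rw [this, hcoeff I g ⟨1, by omega⟩, hI1, Nat.div_self hg, ha 1 (by omega)]
      simp
    · intro b _ hb
      have hb0 : l₀ b = 0 := by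
        rw [hl₀def, Finsupp.single_apply, if_neg (fun h => hb h.symm)]
      rw [hb0, hcoeff b 0 (dvd_zero _), Nat.zero_div, ha 0 (by omega)]
      simp
    · exact fun h => absurd (Finset.mem_univ I) h
  have hrest_bd : ∀ l ∈ (Finset.finsuppAntidiag Finset.univ g).erase l₀,
      ‖F l‖ ≤ ‖π I‖ ^ 2 := by
    intro l hl
    obtain ⟨hlne, hlmem⟩ := Finset.mem_erase.mp hl
    obtain ⟨hlsum, -⟩ := Finset.mem_finsuppAntidiag.mp hlmem
    by_cases hdvd : ∀ i : Fin g, ((i : ℕ) + 1) ∣ l i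
    · set j : Fin g → ℕ := fun i => l i / ((i : ℕ) + 1) with hjdef
      have hlj : ∀ i, l i = ((i : ℕ) + 1) * j i :=
        fun i => (Nat.mul_div_cancel' (hdvd i)).symm
      have hli_le : ∀ i, l i ≤ g := by
        intro i
        exact le_trans
          (Finset.single_le_sum (fun _ _ => Nat.zero_le _) (Finset.mem_univ i)) hlsum.le
      have hj_lt : ∀ i, j i < p := fun i =>
        lt_of_le_of_lt (le_trans (Nat.div_le_self _ _) (hli_le i)) hgp
      have hfac : ∀ i : Fin g,
          ‖PowerSeries.coeff (R := K) (l i) (ahSubst AH (π i) ((i : ℕ) + 1))‖ = ‖π i‖ ^ j i := by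
        intro i
        rw [hcoeff i (l i) (hdvd i), ha _ (hj_lt i), norm_mul,
          fact_norm_one p hp hnorm (hj_lt i), one_mul, norm_pow]
      have hsumj : 2 ≤ ∑ i : Fin g, j i := by
        by_contra hcon
        push_neg at hcon
        have h01 : (∑ i : Fin g, j i = 0) ∨ (∑ i : Fin g, j i = 1) := by omega
        rcases h01 with h0 | h1
        · have hz : ∀ i ∈ Finset.univ, j i = 0 := by
            intro i hi
            exact (Finset.sum_eq_zero_iff).mp h0 i hi
          have : g = 0 := by
            rw [← hlsum]
            apply Finset.sum_eq_zero
            intro i hi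
            rw [hlj i, hz i hi, mul_zero]
          omega
        · have hex : ∃ i₀ : Fin g, j i₀ ≠ 0 := by
            by_contra hall
            push_neg at hall
            rw [Finset.sum_eq_zero (fun i _ => hall i)] at h1
            omega
          obtain ⟨i₀, hi₀⟩ := hex
          have hsplit := Finset.add_sum_erase Finset.univ j (Finset.mem_univ i₀)
          have hji0 : 1 ≤ j i₀ := Nat.one_le_iff_ne_zero.mpr hi₀
          have hrest0 : ∀ b ∈ Finset.univ.erase i₀, j b = 0 := by
            intro b hb
            have h1' : j b ≤ ∑ i ∈ Finset.univ.erase i₀, j i :=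
              Finset.single_le_sum (fun _ _ => Nat.zero_le _) hb
            omega
          have hsum0 : ∑ i ∈ Finset.univ.erase i₀, j i = 0 :=
            Finset.sum_eq_zero hrest0
          have hji₀ : j i₀ = 1 := by omega
          have hg_eq : g = (i₀ : ℕ) + 1 := by
            have hsl : Finset.univ.sum ⇑l = (i₀ : ℕ) + 1 := by
              rw [Finset.sum_eq_single i₀]
              · rw [hlj i₀, hji₀, mul_one]
              · intro b _ hb
                rw [hlj b, hrest0 b (Finset.mem_erase.mpr ⟨hb, Finset.mem_univ b⟩), mul_zero]
              · exact fun h => absurd (Finset.mem_univ i₀) h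
            omega
          have hIval : (I : ℕ) = g - 1 := rfl
          have hi₀I : i₀ = I := Fin.ext (by omega)
          apply hlne
          ext i
          rcases eq_or_ne i i₀ with rfl | hii
          · have h1 : l i = g := by rw [hlj i, hji₀, mul_one]; omega
            have h2 : l₀ i = g := by
              rw [hl₀def, Finsupp.single_apply, if_pos hi₀I.symm]
            rw [h1, h2]
          · have hj0 : j i = 0 := hrest0 i (Finset.mem_erase.mpr ⟨hii, Finset.mem_univ i⟩)
            rw [hlj i, hj0, mul_zero, hl₀def, Finsupp.single_apply,
              if_neg (fun h => hii (hi₀I.trans h).symm)]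
      calc ‖F l‖ = ∏ i : Fin g, ‖PowerSeries.coeff (R := K) (l i) (ahSubst AH (π i) ((i : ℕ) + 1))‖ := by
            simp only [hFdef]; exact norm_prod _ _
        _ = ∏ i : Fin g, ‖π i‖ ^ j i := by
            exact Finset.prod_congr rfl fun i _ => hfac i
        _ ≤ ∏ i : Fin g, ‖π I‖ ^ j i := by
            apply Finset.prod_le_prod
            · intro i _; positivity
            · intro i _; exact pow_le_pow_left₀ (norm_nonneg _) (hπle i) _
        _ = ‖π I‖ ^ (∑ i : Fin g, j i) := Finset.prod_pow_eq_pow_sum _ _ _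
        _ ≤ ‖π I‖ ^ 2 := pow_le_pow_of_le_one (norm_nonneg _) hπ1.le hsumj
    · push_neg at hdvd
      obtain ⟨i, hi⟩ := hdvd
      have hc0 : PowerSeries.coeff (R := K) (l i) (ahSubst AH (π i) ((i : ℕ) + 1)) = 0 := by
        simp [ahSubst, PowerSeries.coeff_mk, hi]
      have hF0 : F l = 0 := by
        simp only [hFdef]
        exact Finset.prod_eq_zero (Finset.mem_univ i) hc0
      rw [hF0, norm_zero]
      positivity
  show ‖∑ l ∈ Finset.finsuppAntidiag Finset.univ g, F l‖ = ‖π I‖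
  rw [← Finset.add_sum_erase _ F hl₀mem, hmain]
  have hrest : ‖∑ l ∈ (Finset.finsuppAntidiag Finset.univ g).erase l₀, F l‖ ≤ ‖π I‖ ^ 2 :=
    IsUltrametricDist.norm_sum_le_of_forall_le_of_nonneg (by positivity) hrest_bd
  have hlt : ‖∑ l ∈ (Finset.finsuppAntidiag Finset.univ g).erase l₀, F l‖ < ‖π I‖ := by
    have := hπ0 I
    nlinarith
  rw [IsUltrametricDist.norm_add_eq_max_of_norm_ne_norm hlt.ne', max_eq_left hlt.le]
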